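/- Let X ≠ Y be valid labelings, (σ, I) a move that maps X to Y, and σ' the corresponding modified proposal. Then w(X) · P(σ) · P(I | σ, X) = w(Y) · P(σ') · P(I | σ', Y). -/
import Mathlib


open scoped Classical
open Finset

noncomputable section

namespace DistSampling

variable {V L : Type*} [Fintype V] [Fintype L] [DecidableEq V] [DecidableEq L]
  [Nonempty V] [Nonempty L]

/-- `Sw b v` is the normalizing constant `S_v = Σ_{l ∈ L} b_v(l)`. -/
def Sw (b : V → L → ℝ) (v : V) : ℝ := ∑ l, b v l

/-- `Cstar C R` is the maximum value `C*_R` of the constraint `C_R` over all labelings. -/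
def Cstar (C : Finset V → (V → L) → ℝ) (R : Finset V) : ℝ :=
  Finset.univ.sup' Finset.univ_nonempty (fun X : V → L => C R X)

/-- The weight `w(X)` of a labeling `X`. -/
def weight (b : V → L → ℝ) (𝒮 : Finset (Finset V)) (C : Finset V → (V → L) → ℝ)
    (X : V → L) : ℝ :=
  (∏ v, b v (X v)) * ∏ R ∈ 𝒮, C R X

/-- A vertex is restricted under the filter outcome `I` if it belongs to a
constraint set that fails its filter. -/
def Restricted (𝒮 : Finset (Finset V)) (I : {R // R ∈ 𝒮} → Bool) (v : V) : Prop :=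
  ∃ R : {R // R ∈ 𝒮}, v ∈ R.val ∧ I R = false

/-- The move `(σ, I)` maps the labeling `X` to the labeling `Y`:
active unrestricted vertices adopt their proposal, everyone else keeps their label. -/
def MoveMapsTo (𝒮 : Finset (Finset V)) (σ : V → Option L) (I : {R // R ∈ 𝒮} → Bool)
    (X Y : V → L) : Prop :=
  ∀ v, Y v = if Restricted 𝒮 I v then X v else (σ v).getD (X v)

/-- A choice vector for constraint set `R`: each vertex of `R` chooses 'cur'
(`false`) or, if active, 'prop' (`true`), with at least one 'prop'; vertices
outside `R` make no choice. -/
def IsChoice (σ : V → Option L) (R : Finset V) (c : V → Bool) : Prop :=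
  (∀ v, c v = true → v ∈ R ∧ (σ v).isSome) ∧ (∃ v ∈ R, c v = true)

/-- The potential labeling `ℓ_c` determined by a choice vector `c`. -/
def potential (σ : V → Option L) (X : V → L) (c : V → Bool) : V → L :=
  fun v => if c v then (σ v).getD (X v) else X v

/-- `q_R(σ, X)`: the probability that constraint set `R` passes the local filter. -/
def q (C : Finset V → (V → L) → ℝ) (σ : V → Option L) (X : V → L) (R : Finset V) : ℝ :=
  ∏ c ∈ Finset.univ.filter (fun c : V → Bool => IsChoice σ R c),
    C R (potential σ X c) / Cstar C R

/-- `P(σ)`: the probability of the marking/proposal outcome `σ`. -/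
def Pprop (b : V → L → ℝ) (p : ℝ) (σ : V → Option L) : ℝ :=
  ∏ v, (σ v).elim (1 - p) (fun l => p * b v l / Sw b v)

/-- `P(I | σ, X)`: the probability of the filter outcome `I` given proposal `σ`
and current labeling `X`. -/
def Pfilter (C : Finset V → (V → L) → ℝ) (𝒮 : Finset (Finset V))
    (σ : V → Option L) (X : V → L) (I : {R // R ∈ 𝒮} → Bool) : ℝ :=
  ∏ R : {R // R ∈ 𝒮}, (if I R then q C σ X R.val else 1 - q C σ X R.val)

/-- The transition matrix `M` of the distributed Metropolis chain. -/
def M (b : V → L → ℝ) (p : ℝ) (𝒮 : Finset (Finset V))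
    (C : Finset V → (V → L) → ℝ) : Matrix (V → L) (V → L) ℝ :=
  fun X Y => ∑ σ : V → Option L, ∑ I : {R // R ∈ 𝒮} → Bool,
    if MoveMapsTo 𝒮 σ I X Y then Pprop b p σ * Pfilter C 𝒮 σ X I else 0

/-- `π(X)`: the probability of labeling `X`, proportional to its weight. -/
def pie (b : V → L → ℝ) (𝒮 : Finset (Finset V)) (C : Finset V → (V → L) → ℝ)
    (X : V → L) : ℝ :=
  weight b 𝒮 C X / ∑ Z : V → L, weight b 𝒮 C Z

/-- The modified proposal `σ'` associated with a move taking `X` to `Y`. -/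
def sigma' (X Y : V → L) (σ : V → Option L) : V → Option L :=
  fun v => if X v ≠ Y v then some (X v) else σ v



/-! Auxiliary lemmas for STATEMENT 4. -/

lemma sigma'_eq_of_eq {X Y : V → L} (σ : V → Option L) {v : V} (h : X v = Y v) :
    sigma' X Y σ v = σ v := by simp [sigma', h]

lemma sigma'_eq_of_ne {X Y : V → L} (σ : V → Option L) {v : V} (h : X v ≠ Y v) :
    sigma' X Y σ v = some (X v) := by simp [sigma', h]

lemma active_of_ne {𝒮 : Finset (Finset V)} {σ : V → Option L} {I : {R // R ∈ 𝒮} → Bool}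
    {X Y : V → L} (hmap : MoveMapsTo 𝒮 σ I X Y) {v : V} (h : X v ≠ Y v) :
    σ v = some (Y v) := by
  have hv := hmap v
  by_cases hr : Restricted 𝒮 I v
  · rw [if_pos hr] at hv; exact absurd hv.symm h
  · rw [if_neg hr] at hv
    cases hσ : σ v with
    | none => rw [hσ] at hv; exact absurd hv.symm h
    | some l => rw [hσ] at hv; simp at hv; rw [hv]

/-- If `σ₂ = σ` and `X = Y` on `R`, then `q` is unchanged. -/
lemma q_eq_of_agree (C : Finset V → (V → L) → ℝ) (σ σ₂ : V → Option L) (X Y : V → L)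
    (R : Finset V) (hσ : ∀ v ∈ R, σ₂ v = σ v) (hXY : ∀ v ∈ R, X v = Y v)
    (hCloc : ∀ A B : V → L, (∀ v ∈ R, A v = B v) → C R A = C R B) :
    q C σ X R = q C σ₂ Y R := by
  unfold q
  apply Finset.prod_congr
  · ext c
    simp only [Finset.mem_filter, Finset.mem_univ, true_and]
    constructor
    · rintro ⟨h1, h2⟩
      exact ⟨fun v hv => ⟨(h1 v hv).1, by rw [hσ v (h1 v hv).1]; exact (h1 v hv).2⟩, h2⟩
    · rintro ⟨h1, h2⟩
      exact ⟨fun v hv => ⟨(h1 v hv).1, by rw [← hσ v (h1 v hv).1]; exact (h1 v hv).2⟩, h2⟩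
  · intro c hc
    simp only [Finset.mem_filter, Finset.mem_univ, true_and] at hc
    congr 1
    apply hCloc
    intro v hv
    unfold potential
    by_cases h : c v
    · simp [h, hσ v hv, hXY v hv]
    · simp [h, hXY v hv]

/-- The special choice vector selecting exactly the changed vertices of `R`. -/
def cstarR (R : Finset V) (X Y : V → L) : V → Bool := fun v => decide (v ∈ R ∧ X v ≠ Y v)

/-- The involution flipping choices on changed vertices of `R`. -/
def phiR (R : Finset V) (X Y : V → L) (c : V → Bool) : V → Bool :=
  fun v => if v ∈ R ∧ X v ≠ Y v then !(c v) else c v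

lemma phiR_invol (R : Finset V) (X Y : V → L) (c : V → Bool) :
    phiR R X Y (phiR R X Y c) = c := by
  funext v
  unfold phiR
  by_cases h : v ∈ R ∧ X v ≠ Y v <;> simp [h]

lemma phiR_mem {R : Finset V} {X Y : V → L} {σa σb : V → Option L}
    (hagree : ∀ v ∈ R, X v = Y v → σb v = σa v)
    (hsome : ∀ v ∈ R, X v ≠ Y v → (σb v).isSome)
    {c : V → Bool} (hc : IsChoice σa R c) (hne : c ≠ cstarR R X Y) :
    IsChoice σb R (phiR R X Y c) ∧ phiR R X Y c ≠ cstarR R X Y := by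
  obtain ⟨hc1, hc2⟩ := hc
  constructor
  · constructor
    · intro v hv
      by_cases h : v ∈ R ∧ X v ≠ Y v
      · exact ⟨h.1, hsome v h.1 h.2⟩
      · rw [phiR, if_neg h] at hv
        obtain ⟨hvR, hs⟩ := hc1 v hv
        refine ⟨hvR, ?_⟩
        by_cases hxy : X v = Y v
        · rw [hagree v hvR hxy]; exact hs
        · exact absurd ⟨hvR, hxy⟩ h
    · by_contra hcon
      push_neg at hcon
      apply hne
      funext v
      by_cases hvR : v ∈ R
      · by_cases hxy : X v = Y v
        · have : phiR R X Y c v = c v := by rw [phiR, if_neg (by tauto)]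
          have h2 : phiR R X Y c v ≠ true := hcon v hvR
          simp only [cstarR]
          rw [decide_eq_false (by tauto)]
          rw [this] at h2
          simpa using h2
        · have : phiR R X Y c v = !(c v) := by rw [phiR, if_pos ⟨hvR, hxy⟩]
          have h2 : phiR R X Y c v ≠ true := hcon v hvR
          rw [this] at h2
          simp only [cstarR]
          rw [decide_eq_true (show v ∈ R ∧ X v ≠ Y v from ⟨hvR, hxy⟩)]
          simpa using h2
      · simp only [cstarR]
        rw [decide_eq_false (by tauto)]
        by_contra hcv
        exact hvR (hc1 v (by simpa using hcv)).1
  · intro heq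
    have hall : ∀ v, c v = false := by
      intro v
      have := congrFun heq v
      by_cases h : v ∈ R ∧ X v ≠ Y v
      · rw [phiR, if_pos h] at this
        simp only [cstarR] at this
        rw [decide_eq_true h] at this
        simpa using this
      · rw [phiR, if_neg h] at this
        simp only [cstarR] at this
        rw [decide_eq_false h] at this
        exact this
    obtain ⟨v, hvR, hv⟩ := hc2
    rw [hall v] at hv
    exact absurd hv (by simp)

/-- The core identity for a single constraint set. -/
lemma key_q (C : Finset V → (V → L) → ℝ) (σ : V → Option L) (X Y : V → L)
    (R : Finset V)
    (hCloc : ∀ A B : V → L, (∀ v ∈ R, A v = B v) → C R A = C R B)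
    (hact : ∀ v, X v ≠ Y v → σ v = some (Y v)) :
    C R X * q C σ X R = C R Y * q C (sigma' X Y σ) Y R := by
  set σ₂ := sigma' X Y σ with hσ₂def
  by_cases hall : ∀ v ∈ R, X v = Y v
  · rw [hCloc X Y hall,
      q_eq_of_agree C σ σ₂ X Y R (fun v hv => sigma'_eq_of_eq σ (hall v hv)) hall hCloc]
  · push_neg at hall
    set cs := cstarR R X Y with hcs
    have hagree1 : ∀ v ∈ R, X v = Y v → σ₂ v = σ v := fun v _ h => sigma'_eq_of_eq σ h
    have hsome2 : ∀ v ∈ R, X v ≠ Y v → (σ₂ v).isSome := by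
      intro v _ h; rw [hσ₂def, sigma'_eq_of_ne σ h]; rfl
    have hsome1 : ∀ v ∈ R, X v ≠ Y v → (σ v).isSome := by
      intro v _ h; rw [hact v h]; rfl
    have hcs_mem1 : IsChoice σ R cs := by
      constructor
      · intro v hv
        rw [hcs, cstarR] at hv
        have h := of_decide_eq_true hv
        exact ⟨h.1, hsome1 v h.1 h.2⟩
      · obtain ⟨v, hvR, hv⟩ := hall
        exact ⟨v, hvR, by rw [hcs, cstarR]; exact decide_eq_true ⟨hvR, hv⟩⟩
    have hcs_mem2 : IsChoice σ₂ R cs := by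
      constructor
      · intro v hv
        rw [hcs, cstarR] at hv
        have h := of_decide_eq_true hv
        exact ⟨h.1, hsome2 v h.1 h.2⟩
      · obtain ⟨v, hvR, hv⟩ := hall
        exact ⟨v, hvR, by rw [hcs, cstarR]; exact decide_eq_true ⟨hvR, hv⟩⟩
    have hval1 : C R (potential σ X cs) = C R Y := by
      apply hCloc
      intro v hv
      unfold potential
      by_cases h : X v = Y v
      · rw [if_neg, h]
        rw [hcs, cstarR]
        simp [h]
      · rw [if_pos, hact v h]
        · rfl
        · rw [hcs, cstarR]; exact decide_eq_true ⟨hv, h⟩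
    have hval2 : C R (potential σ₂ Y cs) = C R X := by
      apply hCloc
      intro v hv
      unfold potential
      by_cases h : X v = Y v
      · rw [if_neg, ← h]
        rw [hcs, cstarR]
        simp [h]
      · rw [if_pos, hσ₂def, sigma'_eq_of_ne σ h]
        · rfl
        · rw [hcs, cstarR]; exact decide_eq_true ⟨hv, h⟩
    have hmem1 : cs ∈ Finset.univ.filter (fun c : V → Bool => IsChoice σ R c) := by
      simp [hcs_mem1]
    have hmem2 : cs ∈ Finset.univ.filter (fun c : V → Bool => IsChoice σ₂ R c) := by
      simp [hcs_mem2]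
    have hprod : ∏ c ∈ (Finset.univ.filter (fun c : V → Bool => IsChoice σ R c)).erase cs,
        C R (potential σ X c) / Cstar C R =
        ∏ c ∈ (Finset.univ.filter (fun c : V → Bool => IsChoice σ₂ R c)).erase cs,
        C R (potential σ₂ Y c) / Cstar C R := by
      apply Finset.prod_nbij' (i := phiR R X Y) (j := phiR R X Y)
      · intro c hcmem
        simp only [Finset.mem_erase, Finset.mem_filter, Finset.mem_univ, true_and] at hcmem ⊢
        obtain ⟨hcne, hcch⟩ := hcmem
        have := phiR_mem hagree1 hsome2 hcch hcne
        exact ⟨this.2, this.1⟩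
      · intro c hcmem
        simp only [Finset.mem_erase, Finset.mem_filter, Finset.mem_univ, true_and] at hcmem ⊢
        obtain ⟨hcne, hcch⟩ := hcmem
        have := phiR_mem (σa := σ₂) (σb := σ)
          (fun v hv h => (hagree1 v hv h).symm) hsome1 hcch hcne
        exact ⟨this.2, this.1⟩
      · intro c _; exact phiR_invol R X Y c
      · intro c _; exact phiR_invol R X Y c
      · intro c hcmem
        simp only [Finset.mem_erase, Finset.mem_filter, Finset.mem_univ, true_and] at hcmem
        congr 1
        apply hCloc
        intro v hv
        unfold potential
        by_cases h : X v = Y v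
        · have hphi : phiR R X Y c v = c v := by rw [phiR, if_neg (by tauto)]
          rw [hphi]
          by_cases hc : c v
          · rw [if_pos hc, if_pos hc, hagree1 v hv h, h]
          · rw [if_neg hc, if_neg hc, h]
        · have hphi : phiR R X Y c v = !(c v) := by rw [phiR, if_pos ⟨hv, h⟩]
          rw [hphi, hact v h, hσ₂def, sigma'_eq_of_ne σ h]
          cases hcv : c v <;> simp [hcv]
    rw [q, q, ← Finset.mul_prod_erase _ _ hmem1, ← Finset.mul_prod_erase _ _ hmem2,
      hval1, hval2, hprod]
    ring

/-- w(X)·P(σ)·P(I|σ,X) = w(Y)·P(σ')·P(I|σ',Y). -/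
theorem move_weight_ratio
(b : V → L → ℝ) (p : ℝ) (𝒮 : Finset (Finset V)) (C : Finset V → (V → L) → ℝ)
    (hb : ∀ v l, 0 ≤ b v l) (hS : ∀ v, 0 < Sw b v)
    (hcard : ∀ R ∈ 𝒮, 2 ≤ R.card)
    (hC0 : ∀ R ∈ 𝒮, ∀ X : V → L, 0 ≤ C R X)
    (hCloc : ∀ R ∈ 𝒮, ∀ X Y : V → L, (∀ v ∈ R, X v = Y v) → C R X = C R Y)
    (hCstar : ∀ R ∈ 𝒮, 0 < Cstar C R)
    (hp : 0 < p) (hp1 : p < 1)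
    (hvalid : ∃ Z : V → L, 0 < weight b 𝒮 C Z)
    (X Y : V → L) (hX : 0 < weight b 𝒮 C X) (hY : 0 < weight b 𝒮 C Y) (hXY : X ≠ Y)
    (σ : V → Option L) (I : {R // R ∈ 𝒮} → Bool) (hmap : MoveMapsTo 𝒮 σ I X Y) :
    weight b 𝒮 C X * (Pprop b p σ * Pfilter C 𝒮 σ X I) =
      weight b 𝒮 C Y * (Pprop b p (sigma' X Y σ) * Pfilter C 𝒮 (sigma' X Y σ) Y I) := by
  have hact : ∀ v, X v ≠ Y v → σ v = some (Y v) := fun v h => active_of_ne hmap h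
  have hrestr : ∀ v, X v ≠ Y v → ¬ Restricted 𝒮 I v := by
    intro v h hr
    have hv := hmap v
    rw [if_pos hr] at hv
    exact h hv.symm
  -- vertex part
  have hA : (∏ v, b v (X v)) * Pprop b p σ =
      (∏ v, b v (Y v)) * Pprop b p (sigma' X Y σ) := by
    unfold Pprop
    rw [← Finset.prod_mul_distrib, ← Finset.prod_mul_distrib]
    refine Finset.prod_congr rfl fun v _ => ?_
    by_cases h : X v = Y v
    · rw [sigma'_eq_of_eq σ h, h]
    · rw [hact v h, sigma'_eq_of_ne σ h]
      simp only [Option.elim_some]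
      ring
  -- constraint part
  have hB : ∀ R : {R // R ∈ 𝒮},
      C R.val X * (if I R then q C σ X R.val else 1 - q C σ X R.val) =
      C R.val Y * (if I R then q C (sigma' X Y σ) Y R.val
        else 1 - q C (sigma' X Y σ) Y R.val) := by
    intro R
    have hClocR : ∀ A B : V → L, (∀ v ∈ R.val, A v = B v) → C R.val A = C R.val B :=
      fun A B h => hCloc R.val R.prop A B h
    cases hIR : I R with
    | false =>
      rw [if_neg (by simp), if_neg (by simp)]
      have hXYR : ∀ v ∈ R.val, X v = Y v := by
        intro v hv
        by_contra h
        exact hrestr v h ⟨R, hv, hIR⟩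
      rw [hClocR X Y hXYR,
        q_eq_of_agree C σ (sigma' X Y σ) X Y R.val
          (fun v hv => sigma'_eq_of_eq σ (hXYR v hv)) hXYR hClocR]
    | true =>
      simp only [if_pos rfl]
      exact key_q C σ X Y R.val hClocR hact
  have hprod𝒮X : (∏ R ∈ 𝒮, C R X) = ∏ R : {R // R ∈ 𝒮}, C R.val X :=
    (Finset.prod_coe_sort 𝒮 (fun R => C R X)).symm
  have hprod𝒮Y : (∏ R ∈ 𝒮, C R Y) = ∏ R : {R // R ∈ 𝒮}, C R.val Y :=
    (Finset.prod_coe_sort 𝒮 (fun R => C R Y)).symm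
  unfold weight Pfilter
  rw [hprod𝒮X, hprod𝒮Y]
  calc ((∏ v, b v (X v)) * ∏ R : {R // R ∈ 𝒮}, C R.val X) *
      (Pprop b p σ * ∏ R : {R // R ∈ 𝒮},
        (if I R then q C σ X R.val else 1 - q C σ X R.val))
      = ((∏ v, b v (X v)) * Pprop b p σ) *
        ∏ R : {R // R ∈ 𝒮}, C R.val X *
          (if I R then q C σ X R.val else 1 - q C σ X R.val) := by
        rw [Finset.prod_mul_distrib]; ring
    _ = ((∏ v, b v (Y v)) * Pprop b p (sigma' X Y σ)) *
        ∏ R : {R // R ∈ 𝒮}, C R.val Y *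
          (if I R then q C (sigma' X Y σ) Y R.val
            else 1 - q C (sigma' X Y σ) Y R.val) := by
        rw [hA, Finset.prod_congr rfl (fun R _ => hB R)]
    _ = ((∏ v, b v (Y v)) * ∏ R : {R // R ∈ 𝒮}, C R.val Y) *
      (Pprop b p (sigma' X Y σ) * ∏ R : {R // R ∈ 𝒮},
        (if I R then q C (sigma' X Y σ) Y R.val
          else 1 - q C (sigma' X Y σ) Y R.val)) := by
        rw [Finset.prod_mul_distrib]; ring


end DistSampling
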